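/- arXiv:2002.06043 — 3 statements merged into one kernel-verified Lean document; each statement's English description precedes it below -/
import Mathlib

section
/- For sampling without replacement, the probability of an unordered sample satisfies the recursion p(S^k) = ∑_{s∈S^k} p(s) · p^{D\{s}}(S^k \ {s}). -/
open Finset MeasureTheory

variable {α : Type*}

/-- Probability of drawing the ordered sample `B` sequentially without replacement
from (unnormalized) weights `p`, when `t` is the total remaining probability mass. -/
noncomputable def ordProb (p : α → ℝ) : ℝ → List α → ℝ
  | _, [] => 1
  | t, b :: L => (p b / t) * ordProb p (t - p b) L

/-- Probability of drawing the unordered sample `S` without replacement: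
sum of `ordProb` over all orderings of `S`. -/
noncomputable def setProb (p : α → ℝ) (t : ℝ) (S : Finset α) : ℝ :=
  (S.toList.permutations.map (ordProb p t)).sum

/-- The finset of orderings of `S`. -/
noncomputable def perms [DecidableEq α] (S : Finset α) : Finset (List α) :=
  S.toList.permutations.toFinset

lemma mem_perms [DecidableEq α] {S : Finset α} {L : List α} :
    L ∈ perms S ↔ L.Perm S.toList := by
  simp [perms, List.mem_toFinset, List.mem_permutations]

lemma setProb_eq_sum [DecidableEq α] (p : α → ℝ) (t : ℝ) (S : Finset α) :
    setProb p t S = ∑ L ∈ perms S, ordProb p t L := by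
  rw [setProb, perms, List.sum_toFinset _ (List.nodup_permutations _ S.nodup_toList)]

lemma perm_coe_val {S : Finset α} {L : List α} :
    L.Perm S.toList ↔ (L : Multiset α) = S.val := by
  rw [← Multiset.coe_eq_coe, Finset.coe_toList]

lemma sum_perms_nonempty [DecidableEq α] (f : List α → ℝ) {S : Finset α}
    (hS : S.Nonempty) :
    ∑ L ∈ perms S, f L = ∑ s ∈ S, ∑ L ∈ perms (S.erase s), f (s :: L) := by
  haveI : Inhabited α := ⟨hS.choose⟩
  rw [Finset.sum_sigma']
  have hemp : ∀ L : List α, L.Perm S.toList → L ≠ [] := by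
    rintro L hL rfl
    obtain ⟨s, hs⟩ := hS
    rw [perm_coe_val] at hL
    have : s ∈ S.val := hs
    rw [← hL] at this
    simp at this
  refine Finset.sum_nbij' (fun L => (⟨L.head!, L.tail⟩ : (_ : α) × List α))
    (fun x => x.1 :: x.2) ?_ ?_ ?_ ?_ ?_
  · intro L hL
    rw [mem_perms] at hL
    have hne : L ≠ [] := hemp L hL
    rw [perm_coe_val] at hL
    have hhead : L.head! ∈ L := List.head!_mem_self hne
    have hheadS : L.head! ∈ S := by
      rw [← Finset.mem_val, ← hL]; exact hhead
    simp only [Finset.mem_sigma]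
    refine ⟨hheadS, ?_⟩
    have h1 : (L.head! ::ₘ (L.tail : Multiset α)) = (L : Multiset α) := by
      rw [Multiset.cons_coe, List.cons_head!_tail hne]
    rw [mem_perms, perm_coe_val, Finset.erase_val, ← hL, ← h1, Multiset.erase_cons_head]
  · rintro ⟨s, L⟩ hx
    simp only [Finset.mem_sigma] at hx
    obtain ⟨hs, hL⟩ := hx
    rw [mem_perms, perm_coe_val] at hL ⊢
    show ((s :: L : List α) : Multiset α) = S.val
    rw [← Multiset.cons_coe, hL, Finset.erase_val]
    exact Multiset.cons_erase hs
  · intro L hL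
    rw [mem_perms] at hL
    exact List.cons_head!_tail (hemp L hL)
  · rintro ⟨s, L⟩ hx
    simp
  · intro L hL
    rw [mem_perms] at hL
    conv_lhs => rw [← List.cons_head!_tail (hemp L hL)]

theorem setProb_recursion [DecidableEq α] (D S : Finset α) (hS : S ⊆ D)
    (k : ℕ) (hk1 : 1 ≤ k) (hcard : S.card = k) (hk : k ≤ D.card)
    (p : α → ℝ) (hp : ∀ x ∈ D, 0 < p x) (hsum : ∑ x ∈ D, p x = 1) :
    setProb p 1 S = ∑ s ∈ S, p s * setProb p (1 - p s) (S.erase s) := by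
  have hne : S.Nonempty := Finset.card_pos.mp (hcard ▸ hk1)
  rw [setProb_eq_sum, sum_perms_nonempty _ hne]
  refine Finset.sum_congr rfl fun s hs => ?_
  rw [setProb_eq_sum, Finset.mul_sum]
  refine Finset.sum_congr rfl fun L hL => ?_
  show (p s / 1) * ordProb p (1 - p s) L = p s * ordProb p (1 - p s) L
  rw [div_one]
end

section
/- For any s ∈ S^k: p(s) + (1 - ∑_{s'∈S^k} p(s')) · P(b_k = s | S^k) = p(s) · R(S^k, s), where P(b_k = s | S^k) is the conditional probability that s is the last element sampled and R(S^k,s) = p^{D\{s}}(S^k\{s})/p(S^k) is the leave-one-out ratio. -/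
open Finset MeasureTheory

variable {α : Type*}

@[simp] lemma ordProb_nil (p : α → ℝ) (t : ℝ) : ordProb p t [] = 1 := rfl

@[simp] lemma ordProb_cons (p : α → ℝ) (t : ℝ) (b : α) (L : List α) :
    ordProb p t (b :: L) = (p b / t) * ordProb p (t - p b) L := rfl

lemma ordProb_pos (p : α → ℝ) : ∀ (L : List α) (t : ℝ),
    (∀ x ∈ L, 0 < p x) → (L.map p).sum < t → 0 < ordProb p t L
  | [], t, _, _ => by simp
  | b :: L, t, hpos, hlt => by
    have hb : 0 < p b := hpos b (by simp)
    have hL : (L.map p).sum < t - p b := by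
      simp only [List.map_cons, List.sum_cons] at hlt; linarith
    have hLnn : 0 ≤ (L.map p).sum := by
      apply List.sum_nonneg; intro x hx
      obtain ⟨y, hy, rfl⟩ := List.mem_map.1 hx
      exact (hpos y (by simp [hy])).le
    have ht : 0 < t := by linarith
    have := ordProb_pos p L (t - p b) (fun x hx => hpos x (by simp [hx])) hL
    simp only [ordProb_cons]
    positivity

/-- Key identity: summing `ordProb p t` over all insertions of `s` into `L`. -/
lemma sum_insertions (p : α → ℝ) (s : α) : ∀ (L : List α) (t : ℝ),
    (∀ x ∈ s :: L, 0 < p x) → ((s :: L).map p).sum < t →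
    ((List.permutations'Aux s L).map (ordProb p t)).sum
      = ordProb p (t - p s) L
        - ((t - p s - (L.map p).sum) / (t - (L.map p).sum)) * ordProb p t L
  | [], t, hpos, hlt => by
    have hs : 0 < p s := hpos s (by simp)
    have ht : 0 < t := by simp at hlt; linarith
    simp only [List.permutations'Aux, List.map_cons, List.map_nil, List.sum_cons,
      List.sum_nil, ordProb_cons, ordProb_nil]
    field_simp
    simp only [sub_zero, mul_zero, add_zero]
    rw [mul_sub, mul_one, mul_div_assoc', mul_div_cancel_left₀ _ (ne_of_gt ht)]
    ring
  | b :: L, t, hpos, hlt => by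
    have hs : 0 < p s := hpos s (by simp)
    have hb : 0 < p b := hpos b (by simp)
    have hLnn : 0 ≤ (L.map p).sum := by
      apply List.sum_nonneg; intro x hx
      obtain ⟨y, hy, rfl⟩ := List.mem_map.1 hx
      exact (hpos y (by simp [hy])).le
    have hlt' : ((s :: L).map p).sum < t - p b := by
      simp only [List.map_cons, List.sum_cons] at hlt ⊢; linarith
    have ht : 0 < t := by
      simp only [List.map_cons, List.sum_cons] at hlt; linarith
    have hts : 0 < t - p s := by
      simp only [List.map_cons, List.sum_cons] at hlt; linarith
    have hpos' : ∀ x ∈ s :: L, 0 < p x := by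
      intro x hx
      rcases List.mem_cons.1 hx with h | h
      · exact hpos x (by simp [h])
      · exact hpos x (by simp [h])
    have IH := sum_insertions p s L (t - p b) hpos' hlt'
    simp only [List.permutations'Aux, List.map_cons, List.map_map, List.sum_cons,
      ordProb_cons]
    have hcomp : (ordProb p t) ∘ (List.cons b)
        = fun M => (p b / t) * ordProb p (t - p b) M := by
      funext M; simp
    rw [hcomp, List.sum_map_mul_left, IH]
    have e1 : t - p b - p s = t - p s - p b := by ring
    rw [e1]
    have e2 : t - p s - p b - (L.map p).sum = t - p s - (p b + (L.map p).sum) := by ring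
    have e3 : t - p b - (L.map p).sum = t - (p b + (L.map p).sum) := by ring
    set A := ordProb p (t - p s - p b) L with hA
    set B := ordProb p (t - p b) L with hB
    have hts0 : (t : ℝ) ≠ 0 := ne_of_gt ht
    have hts1 : t - p s ≠ 0 := ne_of_gt hts
    have hne2 : t - (p b + (List.map p L).sum) ≠ 0 := by
      simp only [List.map_cons, List.sum_cons] at hlt
      intro h; nlinarith
    rw [e2, e3]
    field_simp
    ring

lemma setProb_eq (p : α → ℝ) (t : ℝ) (S : Finset α) :
    setProb p t S = (S.toList.permutations'.map (ordProb p t)).sum :=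
  ((List.permutations_perm_permutations' S.toList).map (ordProb p t)).sum_eq

lemma setProb_pos [DecidableEq α] (p : α → ℝ) (t : ℝ) (S : Finset α)
    (hpos : ∀ x ∈ S, 0 < p x) (hlt : ∑ x ∈ S, p x < t) : 0 < setProb p t S := by
  unfold setProb
  apply List.sum_pos
  · intro x hx
    obtain ⟨M, hM, rfl⟩ := List.mem_map.1 hx
    have hMperm : M.Perm S.toList := List.mem_permutations.1 hM
    apply ordProb_pos
    · intro y hy
      exact hpos y (by rw [← Finset.mem_toList]; exact hMperm.subset hy)
    · rw [(hMperm.map p).sum_eq, Finset.sum_map_toList]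
      exact hlt
  · simp only [ne_eq, List.map_eq_nil_iff]
    intro h
    have := List.length_permutations S.toList
    rw [h] at this
    simp at this
    exact Nat.factorial_ne_zero _ this.symm

lemma sum_map_sub_mul (f g : List α → ℝ) (c : ℝ) (l : List (List α)) :
    (l.map (fun M => f M - c * g M)).sum = (l.map f).sum - c * (l.map g).sum := by
  induction l with
  | nil => simp
  | cons a l ih => simp [ih]; ring

lemma setProb_insert [DecidableEq α] (p : α → ℝ) (t : ℝ) (s : α) (T : Finset α)
    (hsT : s ∉ T) (hpos : ∀ x ∈ insert s T, 0 < p x)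
    (hlt : ∑ x ∈ insert s T, p x < t) :
    setProb p t (insert s T)
      = setProb p (t - p s) T
        - ((t - p s - ∑ x ∈ T, p x) / (t - ∑ x ∈ T, p x)) * setProb p t T := by
  have hperm : (insert s T).toList.Perm (s :: T.toList) := Finset.toList_insert hsT
  rw [setProb_eq, (hperm.permutations'.map (ordProb p t)).sum_eq]
  simp only [List.permutations']
  rw [List.map_flatMap, List.flatMap_def, List.sum_flatten, List.map_map]
  have hstep : ∀ M ∈ T.toList.permutations',
      ((List.permutations'Aux s M).map (ordProb p t)).sum
        = ordProb p (t - p s) M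
          - ((t - p s - ∑ x ∈ T, p x) / (t - ∑ x ∈ T, p x)) * ordProb p t M := by
    intro M hM
    have hMperm : M.Perm T.toList := List.mem_permutations'.1 hM
    have hMsum : (M.map p).sum = ∑ x ∈ T, p x := by
      rw [(hMperm.map p).sum_eq, Finset.sum_map_toList]
    have := sum_insertions p s M t
      (by
        intro x hx
        rcases List.mem_cons.1 hx with h | h
        · exact hpos x (by simp [h])
        · exact hpos x (by simp [Or.inr ((Finset.mem_toList).1 (hMperm.subset h))]))
      (by
        simp only [List.map_cons, List.sum_cons, hMsum]
        rwa [Finset.sum_insert hsT] at hlt)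
    rw [this, hMsum]
  have hfun : (List.sum ∘ fun M => (List.permutations'Aux s M).map (ordProb p t))
      = fun M => ((List.permutations'Aux s M).map (ordProb p t)).sum := rfl
  rw [hfun, List.map_congr_left hstep, sum_map_sub_mul, ← setProb_eq, ← setProb_eq]

theorem last_sample_leave_one_out [DecidableEq α] (D S : Finset α) (hS : S ⊆ D)
    (s : α) (hs : s ∈ S) (p : α → ℝ) (hp : ∀ x ∈ D, 0 < p x)
    (hsum : ∑ x ∈ D, p x = 1) (hmass : ∑ s' ∈ S, p s' < 1) :
    p s + (1 - ∑ s' ∈ S, p s') *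
        ((setProb p 1 (S.erase s) / setProb p 1 S) * (p s / (1 - ∑ s' ∈ S.erase s, p s')))
      = p s * (setProb p (1 - p s) (S.erase s) / setProb p 1 S) := by
  have hposS : ∀ x ∈ S, 0 < p x := fun x hx => hp x (hS hx)
  have hps : 0 < p s := hposS s hs
  have hsT : s ∉ S.erase s := Finset.notMem_erase s S
  have hins : insert s (S.erase s) = S := Finset.insert_erase hs
  have herase_sum : ∑ x ∈ S.erase s, p x = (∑ x ∈ S, p x) - p s := by
    have h := Finset.add_sum_erase S p hs
    linarith
  have hTlt : ∑ x ∈ S.erase s, p x < 1 - p s := by rw [herase_sum]; linarith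
  have hTlt1 : (1 : ℝ) - ∑ x ∈ S.erase s, p x ≠ 0 := by
    have : 0 ≤ p s := hps.le
    intro h; rw [herase_sum] at h; linarith [herase_sum ▸ hTlt]
  have hQpos : 0 < setProb p 1 S := setProb_pos p 1 S hposS hmass
  have hkey := setProb_insert p 1 s (S.erase s) hsT
    (by rw [hins]; exact hposS) (by rw [hins]; exact hmass)
  rw [hins, herase_sum] at hkey
  -- hkey : setProb p 1 S = setProb p (1 - p s) (S.erase s)
  --        - ((1 - p s - (Σ_S - p s)) / (1 - (Σ_S - p s))) * setProb p 1 (S.erase s)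
  have hQ : setProb p 1 S ≠ 0 := ne_of_gt hQpos
  rw [herase_sum]
  have hden : (1 : ℝ) - ((∑ s' ∈ S, p s') - p s) ≠ 0 := by
    rw [herase_sum] at hTlt1; exact hTlt1
  have hkey2 : setProb p 1 S * (1 - ((∑ s' ∈ S, p s') - p s))
      = setProb p (1 - p s) (S.erase s) * (1 - ((∑ s' ∈ S, p s') - p s))
        - (1 - ∑ s' ∈ S, p s') * setProb p 1 (S.erase s) := by
    rw [hkey]
    field_simp
    ring
  field_simp
  linear_combination hkey2
end

section
/- The without-replacement sampling probability of a set S admits the integral representation p(S) = ∫_{-∞}^{∞} f_{φ_{D\S}}(g) ∏_{i∈S} (1 - F_{φ_i}(g)) dg, where φ_i = log p(i), φ_{D\S} = log ∑_{i∈D\S} p(i), F_φ is the Gumbel(φ) CDF and f_φ its density. -/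
open Finset MeasureTheory

variable {α : Type*}

lemma setProb_empty (p : α → ℝ) (t : ℝ) : setProb p t (∅ : Finset α) = 1 := by
  simp [setProb, ordProb]

lemma setProb_recursion_s15 [DecidableEq α] (p : α → ℝ) (t : ℝ) (S : Finset α) (hne : S.Nonempty) :
    setProb p t S = ∑ a ∈ S, (p a / t) * setProb p (t - p a) (S.erase a) := by
  have hperm : ∀ (R : Finset α) (t' : ℝ),
      setProb p t' R = ∑ l ∈ R.toList.permutations.toFinset, ordProb p t' l := by
    intro R t'
    rw [setProb, ← List.sum_toFinset _ (List.nodup_permutations _ R.nodup_toList)]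
  have hcons : ∀ a ∈ S, S.toList.Perm (a :: (S.erase a).toList) := by
    intro a haS
    have h1 := Finset.toList_insert (Finset.notMem_erase a S)
    rwa [Finset.insert_erase haS] at h1
  rw [hperm]
  have hsplit : S.toList.permutations.toFinset
      = S.biUnion (fun a => ((S.erase a).toList.permutations.toFinset).image (List.cons a)) := by
    ext l
    simp only [List.mem_toFinset, List.mem_permutations, Finset.mem_biUnion, Finset.mem_image]
    constructor
    · intro hl
      obtain ⟨a, l', rfl⟩ : ∃ a l', l = a :: l' := by
        cases l with
        | nil =>
          exfalso
          have : S.toList = [] := hl.symm.eq_nil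
          exact hne.ne_empty (Finset.toList_eq_nil.mp this)
        | cons a l' => exact ⟨a, l', rfl⟩
      have haS : a ∈ S := Finset.mem_toList.mp (hl.subset (List.mem_cons_self (a := a) (l := l')))
      exact ⟨a, haS, l', (hl.trans (hcons a haS)).cons_inv, rfl⟩
    · rintro ⟨a, haS, l', hl', rfl⟩
      exact (hl'.cons a).trans (hcons a haS).symm
  rw [hsplit, Finset.sum_biUnion ?disj]
  · refine Finset.sum_congr rfl fun a _ => ?_
    rw [Finset.sum_image (fun x _ y _ h => by injection h), hperm, Finset.mul_sum]
    exact Finset.sum_congr rfl fun l _ => rfl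
  case disj =>
    intro a _ b _ hab
    refine Finset.disjoint_left.mpr ?_
    rintro l hla hlb
    simp only [Finset.mem_image] at hla hlb
    obtain ⟨x, _, hx⟩ := hla
    obtain ⟨y, _, hy⟩ := hlb
    rw [← hx] at hy
    injection hy with h1 _
    exact hab h1.symm

lemma powerset_swap [DecidableEq α] (S : Finset α) (F : α → Finset α → ℝ) :
    ∑ a ∈ S, ∑ T ∈ (S.erase a).powerset, F a T
      = ∑ T ∈ S.powerset, ∑ a ∈ S \ T, F a T := by
  have h1 : ∀ a : α, (S.erase a).powerset = S.powerset.filter (fun T => a ∉ T) := by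
    intro a
    ext T
    simp only [Finset.mem_powerset, Finset.mem_filter, Finset.subset_erase]
  simp_rw [h1, Finset.sum_filter]
  rw [Finset.sum_comm]
  refine Finset.sum_congr rfl fun T _ => ?_
  rw [← Finset.sum_filter]
  congr 1
  ext a
  simp [Finset.mem_sdiff]

lemma sum_powerset_neg_one_real [DecidableEq α] {S : Finset α} (hne : S.Nonempty) :
    ∑ T ∈ S.powerset, (-1 : ℝ) ^ T.card = 0 := by
  have h := Finset.sum_powerset_neg_one_pow_card_of_nonempty hne
  calc ∑ T ∈ S.powerset, (-1 : ℝ) ^ T.card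
      = ((∑ T ∈ S.powerset, (-1 : ℤ) ^ T.card : ℤ) : ℝ) := by push_cast; rfl
    _ = 0 := by rw [h]; norm_num

lemma setProb_closed [DecidableEq α] (p : α → ℝ) (S : Finset α) :
    ∀ t : ℝ, (∀ i ∈ S, 0 < p i) → (∑ i ∈ S, p i) < t →
    setProb p t S = ∑ T ∈ S.powerset, (-1 : ℝ) ^ T.card *
      ((t - ∑ i ∈ S, p i) / (t - ∑ i ∈ S, p i + ∑ i ∈ T, p i)) := by
  induction S using Finset.strongInduction with
  | _ S ih =>
    intro t hpos hlt
    rcases S.eq_empty_or_nonempty with rfl | hne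
    · have ht : (0:ℝ) < t := by simpa using hlt
      simp [setProb_empty, div_self ht.ne']
    · have hσ : (0:ℝ) ≤ ∑ i ∈ S, p i := Finset.sum_nonneg fun i hi => (hpos i hi).le
      have ht : (0:ℝ) < t := lt_of_le_of_lt hσ hlt
      have hc : (0:ℝ) < t - ∑ i ∈ S, p i := by linarith
      rw [setProb_recursion_s15 p t S hne]
      have key : ∀ a ∈ S, setProb p (t - p a) (S.erase a)
          = ∑ T ∈ (S.erase a).powerset, (-1 : ℝ) ^ T.card *
            ((t - ∑ i ∈ S, p i) / (t - ∑ i ∈ S, p i + ∑ i ∈ T, p i)) := by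
        intro a ha
        have hsa : p a + ∑ i ∈ S.erase a, p i = ∑ i ∈ S, p i := Finset.add_sum_erase S p ha
        have h2 : (t - p a) - ∑ i ∈ S.erase a, p i = t - ∑ i ∈ S, p i := by linarith
        rw [ih (S.erase a) (Finset.erase_ssubset ha) (t - p a)
          (fun i hi => hpos i (Finset.mem_of_mem_erase hi)) (by linarith), h2]
      calc ∑ a ∈ S, (p a / t) * setProb p (t - p a) (S.erase a)
          = ∑ a ∈ S, ∑ T ∈ (S.erase a).powerset, (p a / t) * ((-1 : ℝ) ^ T.card *
              ((t - ∑ i ∈ S, p i) / (t - ∑ i ∈ S, p i + ∑ i ∈ T, p i))) := by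
            refine Finset.sum_congr rfl fun a ha => ?_
            rw [key a ha, Finset.mul_sum]
        _ = ∑ T ∈ S.powerset, ∑ a ∈ S \ T, (p a / t) * ((-1 : ℝ) ^ T.card *
              ((t - ∑ i ∈ S, p i) / (t - ∑ i ∈ S, p i + ∑ i ∈ T, p i))) :=
            powerset_swap S _
        _ = ∑ T ∈ S.powerset, ((-1 : ℝ) ^ T.card *
              ((t - ∑ i ∈ S, p i) / (t - ∑ i ∈ S, p i + ∑ i ∈ T, p i))
              - (-1 : ℝ) ^ T.card * ((t - ∑ i ∈ S, p i) / t)) := by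
            refine Finset.sum_congr rfl fun T hT => ?_
            rw [Finset.mem_powerset] at hT
            have hTsum : ∑ a ∈ S \ T, p a = (∑ i ∈ S, p i) - ∑ i ∈ T, p i :=
              Finset.sum_sdiff_eq_sub hT
            have hσT : (0:ℝ) ≤ ∑ i ∈ T, p i :=
              Finset.sum_nonneg fun i hi => (hpos i (hT hi)).le
            have hden : (0:ℝ) < t - ∑ i ∈ S, p i + ∑ i ∈ T, p i := by linarith
            rw [← Finset.sum_mul, ← Finset.sum_div, hTsum]
            field_simp
            ring
        _ = ∑ T ∈ S.powerset, (-1 : ℝ) ^ T.card *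
              ((t - ∑ i ∈ S, p i) / (t - ∑ i ∈ S, p i + ∑ i ∈ T, p i)) := by
            rw [Finset.sum_sub_distrib, ← Finset.sum_mul, sum_powerset_neg_one_real hne,
              zero_mul, sub_zero]

lemma hasDerivAt_gumbel {b : ℝ} (hb : 0 < b) (g : ℝ) :
    HasDerivAt (fun x : ℝ => Real.exp (-(b * Real.exp (-x))) / b)
      (Real.exp (-g) * Real.exp (-(b * Real.exp (-g)))) g := by
  have h0 : HasDerivAt (fun x : ℝ => Real.exp (-x)) (-Real.exp (-g)) g := by
    simpa [Function.comp_def] using (Real.hasDerivAt_exp (-g)).comp g (hasDerivAt_neg g)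
  have h1 : HasDerivAt (fun x : ℝ => -(b * Real.exp (-x))) (b * Real.exp (-g)) g := by
    simpa [mul_comm, neg_mul, mul_neg, Pi.neg_def] using (h0.const_mul b).neg
  have h2 := ((Real.hasDerivAt_exp _).comp g h1).div_const b
  refine HasDerivAt.congr_deriv h2 ?_
  rw [div_eq_iff hb.ne']
  ring

lemma tendsto_gumbel_atBot {b : ℝ} (hb : 0 < b) :
    Filter.Tendsto (fun x : ℝ => Real.exp (-(b * Real.exp (-x))) / b)
      Filter.atBot (nhds 0) := by
  have h3 : Filter.Tendsto (fun x : ℝ => Real.exp (-x)) Filter.atBot Filter.atTop :=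
    Real.tendsto_exp_atTop.comp Filter.tendsto_neg_atBot_atTop
  have h4 : Filter.Tendsto (fun x : ℝ => -(b * Real.exp (-x))) Filter.atBot Filter.atBot :=
    Filter.tendsto_neg_atTop_atBot.comp (h3.const_mul_atTop hb)
  have h5 := Real.tendsto_exp_atBot.comp h4
  simpa using h5.div_const b

lemma tendsto_gumbel_atTop {b : ℝ} (_hb : 0 < b) :
    Filter.Tendsto (fun x : ℝ => Real.exp (-(b * Real.exp (-x))) / b)
      Filter.atTop (nhds (1 / b)) := by
  have h3 : Filter.Tendsto (fun x : ℝ => Real.exp (-x)) Filter.atTop (nhds 0) :=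
    Real.tendsto_exp_atBot.comp Filter.tendsto_neg_atTop_atBot
  have h4 : Filter.Tendsto (fun x : ℝ => -(b * Real.exp (-x))) Filter.atTop (nhds 0) := by
    simpa using (h3.const_mul b).neg
  have h5 : Filter.Tendsto (fun x : ℝ => Real.exp (-(b * Real.exp (-x))))
      Filter.atTop (nhds 1) := by
    simpa [Function.comp_def] using (Real.continuous_exp.tendsto 0).comp h4
  simpa using h5.div_const b

lemma integrable_gumbel {b : ℝ} (hb : 0 < b) :
    Integrable (fun g : ℝ => Real.exp (-g) * Real.exp (-(b * Real.exp (-g)))) := by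
  have hcont : Continuous (fun g : ℝ => Real.exp (-g) * Real.exp (-(b * Real.exp (-g)))) := by
    continuity
  refine integrable_of_intervalIntegral_norm_bounded (1 / b)
    (a := fun i : ℝ => -i) (b := fun i : ℝ => i) (l := Filter.atTop)
    (fun i => hcont.integrableOn_Ioc) Filter.tendsto_neg_atTop_atBot Filter.tendsto_id ?_
  filter_upwards [Filter.eventually_ge_atTop (0 : ℝ)] with i hi
  have hnorm : (∫ x in (-i)..i, ‖Real.exp (-x) * Real.exp (-(b * Real.exp (-x)))‖)
      = ∫ x in (-i)..i, Real.exp (-x) * Real.exp (-(b * Real.exp (-x))) := by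
    refine intervalIntegral.integral_congr fun x _ => ?_
    exact Real.norm_of_nonneg (by positivity)
  rw [hnorm, intervalIntegral.integral_eq_sub_of_hasDerivAt
    (fun x _ => hasDerivAt_gumbel hb x) (hcont.intervalIntegrable _ _)]
  have hF1 : Real.exp (-(b * Real.exp (-i))) / b ≤ 1 / b := by
    gcongr
    exact Real.exp_le_one_iff.mpr (neg_nonpos.mpr (by positivity))
  have hF2 : (0:ℝ) ≤ Real.exp (-(b * Real.exp (-(-i)))) / b := by positivity
  linarith

lemma integral_gumbel {b : ℝ} (hb : 0 < b) :
    ∫ g : ℝ, Real.exp (-g) * Real.exp (-(b * Real.exp (-g))) = 1 / b := by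
  have := integral_of_hasDerivAt_of_tendsto (fun x => hasDerivAt_gumbel hb x)
    (integrable_gumbel hb) (tendsto_gumbel_atBot hb) (tendsto_gumbel_atTop hb)
  simpa using this

lemma prod_one_sub_exp [DecidableEq α] (S : Finset α) (q : α → ℝ) (u : ℝ) :
    ∏ i ∈ S, (1 - Real.exp (-(q i * u)))
      = ∑ T ∈ S.powerset, (-1 : ℝ) ^ T.card * Real.exp (-((∑ i ∈ T, q i) * u)) := by
  calc ∏ i ∈ S, (1 - Real.exp (-(q i * u)))
      = ∏ i ∈ S, (-Real.exp (-(q i * u)) + 1) := by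
        refine Finset.prod_congr rfl fun i _ => by ring
    _ = ∑ T ∈ S.powerset, (∏ i ∈ T, -Real.exp (-(q i * u))) * ∏ i ∈ S \ T, (1 : ℝ) :=
        Finset.prod_add _ _ _
    _ = _ := by
        refine Finset.sum_congr rfl fun T _ => ?_
        rw [Finset.prod_const_one, mul_one,
          Finset.prod_congr rfl (fun i (_ : i ∈ T) =>
            (by ring : -Real.exp (-(q i * u)) = (-1) * Real.exp (-(q i * u)))),
          Finset.prod_mul_distrib, Finset.prod_const]
        congr 1
        rw [← Real.exp_sum]
        congr 1
        simp only [← neg_mul, ← Finset.sum_mul, Finset.sum_neg_distrib]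

theorem setProb_integral_representation [DecidableEq α] (D S : Finset α) (hS : S ⊂ D)
    (p : α → ℝ) (hp : ∀ x ∈ D, 0 < p x) (hsum : ∑ x ∈ D, p x = 1) :
    setProb p 1 S = ∫ g : ℝ,
      (Real.exp (-g + Real.log (∑ i ∈ D \ S, p i)) *
        Real.exp (-Real.exp (-g + Real.log (∑ i ∈ D \ S, p i)))) *
      ∏ i ∈ S, (1 - Real.exp (-Real.exp (-g + Real.log (p i)))) := by
  set c := ∑ i ∈ D \ S, p i with hcdef
  have hDS : (D \ S).Nonempty := Finset.sdiff_nonempty.mpr hS.2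
  have hc : 0 < c := Finset.sum_pos (fun i hi => hp i (Finset.mem_sdiff.mp hi).1) hDS
  have hpS : ∀ i ∈ S, 0 < p i := fun i hi => hp i (hS.1 hi)
  have hsplit : c + ∑ i ∈ S, p i = 1 := by
    rw [hcdef, Finset.sum_sdiff hS.1, hsum]
  have hσlt : ∑ i ∈ S, p i < 1 := by linarith
  have h1c : (1 : ℝ) - ∑ i ∈ S, p i = c := by linarith
  have hbT : ∀ T ∈ S.powerset, 0 < c + ∑ i ∈ T, p i := by
    intro T hT
    rw [Finset.mem_powerset] at hT
    have : (0:ℝ) ≤ ∑ i ∈ T, p i := Finset.sum_nonneg fun i hi => (hpS i (hT hi)).le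
    linarith
  have hint : ∀ g : ℝ,
      (Real.exp (-g + Real.log c) * Real.exp (-Real.exp (-g + Real.log c))) *
        ∏ i ∈ S, (1 - Real.exp (-Real.exp (-g + Real.log (p i))))
      = ∑ T ∈ S.powerset, ((-1 : ℝ) ^ T.card * c) *
          (Real.exp (-g) * Real.exp (-((c + ∑ i ∈ T, p i) * Real.exp (-g)))) := by
    intro g
    have e1 : Real.exp (-g + Real.log c) = c * Real.exp (-g) := by
      rw [Real.exp_add, Real.exp_log hc]; ring
    have e2 : ∀ i ∈ S, (1 - Real.exp (-Real.exp (-g + Real.log (p i))))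
        = 1 - Real.exp (-(p i * Real.exp (-g))) := by
      intro i hi
      rw [Real.exp_add, Real.exp_log (hpS i hi), mul_comm]
    rw [e1, Finset.prod_congr rfl e2, prod_one_sub_exp S p (Real.exp (-g)), Finset.mul_sum]
    refine Finset.sum_congr rfl fun T hT => ?_
    rw [show -((c + ∑ i ∈ T, p i) * Real.exp (-g))
        = -(c * Real.exp (-g)) + -((∑ i ∈ T, p i) * Real.exp (-g)) by ring, Real.exp_add]
    ring
  have hRHS : (∫ g : ℝ,
      (Real.exp (-g + Real.log c) * Real.exp (-Real.exp (-g + Real.log c))) *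
        ∏ i ∈ S, (1 - Real.exp (-Real.exp (-g + Real.log (p i)))))
      = ∑ T ∈ S.powerset, ((-1 : ℝ) ^ T.card * c) * (1 / (c + ∑ i ∈ T, p i)) := by
    rw [MeasureTheory.integral_congr_ae (Filter.Eventually.of_forall hint)]
    rw [MeasureTheory.integral_finset_sum _
      (fun T hT => ((integrable_gumbel (hbT T hT)).const_mul _))]
    refine Finset.sum_congr rfl fun T hT => ?_
    rw [MeasureTheory.integral_const_mul, integral_gumbel (hbT T hT)]
  rw [hRHS, setProb_closed p S 1 hpS hσlt]
  refine Finset.sum_congr rfl fun T hT => ?_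
  rw [h1c, mul_one_div]
  ring
end
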